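/- arXiv:2003.02285 — 3 statements merged into one kernel-verified Lean document; each statement's English description precedes it below -/
import Mathlib

section
/- Let S₁ = X⊗Z⊗Z⊗X⊗1, S₂ = 1⊗X⊗Z⊗Z⊗X, S₃ = X⊗1⊗X⊗Z⊗Z, S₄ = Z⊗X⊗1⊗X⊗Z be the five-qubit code stabilizers, regarded via Kronecker products as endomorphisms of the 32-dimensional complex vector space ℂ²⊗ℂ²⊗ℂ²⊗ℂ²⊗ℂ². Then the common fixed subspace C₅ = ⨅_{i ∈ Fin 4} ker(Sᵢ − id) has complex dimension exactly 2. -/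
open Matrix
open scoped Kronecker

namespace FiveQubitCode

/-- The Pauli matrix X. -/
def X : Matrix (Fin 2) (Fin 2) ℂ := !![0, 1; 1, 0]

/-- The Pauli matrix Z. -/
def Z : Matrix (Fin 2) (Fin 2) ℂ := !![1, 0; 0, -1]

/-- The index type of the 32-dimensional five-qubit space `ℂ²⊗ℂ²⊗ℂ²⊗ℂ²⊗ℂ²`. -/
abbrev Q : Type := Fin 2 × Fin 2 × Fin 2 × Fin 2 × Fin 2

/-- The Kronecker (tensor) product of a string of five 2×2 matrices. -/
def emb (g : Fin 5 → Matrix (Fin 2) (Fin 2) ℂ) : Matrix Q Q ℂ :=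
  g 0 ⊗ₖ (g 1 ⊗ₖ (g 2 ⊗ₖ (g 3 ⊗ₖ g 4)))

/-- The four stabilizers `S₁ = X⊗Z⊗Z⊗X⊗1`, `S₂ = 1⊗X⊗Z⊗Z⊗X`, `S₃ = X⊗1⊗X⊗Z⊗Z`,
`S₄ = Z⊗X⊗1⊗X⊗Z` of the five-qubit code. -/
def S : Fin 4 → Matrix Q Q ℂ :=
  ![emb ![X, Z, Z, X, 1], emb ![1, X, Z, Z, X], emb ![X, 1, X, Z, Z], emb ![Z, X, 1, X, Z]]

/-! ### Integer models of everything -/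

def Xz : Matrix (Fin 2) (Fin 2) ℤ := !![0, 1; 1, 0]
def Zz : Matrix (Fin 2) (Fin 2) ℤ := !![1, 0; 0, -1]

def embz (g : Fin 5 → Matrix (Fin 2) (Fin 2) ℤ) : Matrix Q Q ℤ :=
  g 0 ⊗ₖ (g 1 ⊗ₖ (g 2 ⊗ₖ (g 3 ⊗ₖ g 4)))

def Sz : Fin 4 → Matrix Q Q ℤ :=
  ![embz ![Xz, Zz, Zz, Xz, 1], embz ![1, Xz, Zz, Zz, Xz],
    embz ![Xz, 1, Xz, Zz, Zz], embz ![Zz, Xz, 1, Xz, Zz]]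

def gv : Fin 2 → Fin 32 → ℤ :=
  ![![1, 0, 0, -1, 0, 1, -1, 0, 0, 1, 1, 0, -1, 0, 0, -1, 0, -1, 1, 0, 1, 0, 0, -1, -1, 0, 0, -1, 0, -1, -1, 0],
    ![0, -1, -1, 0, -1, 0, 0, -1, -1, 0, 0, 1, 0, 1, -1, 0, -1, 0, 0, -1, 0, 1, 1, 0, 0, -1, 1, 0, -1, 0, 0, 1]]

def idx : Q → Fin 32 := fun (a, b, c, d, e) =>
  ⟨16 * a.val + 8 * b.val + 4 * c.val + 2 * d.val + e.val, by omega⟩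

/-- The 32×2 matrix of the two logical codewords. -/
def Gz : Matrix Q (Fin 2) ℤ := fun q j => gv j (idx q)

/-- Its transpose. -/
def Kz : Matrix (Fin 2) Q ℤ := fun j q => gv j (idx q)

def T23 : Matrix (Fin 32) (Fin 32) ℤ :=
  !![1, 0, 0, 0, 0, 0, 0, 0, 0, 0, 1, 0, 0, 0, 0, 0, 0, 0, 0, 0, 1, 0, 0, 0, 0, 0, 0, 0, 0, 0, -1, 0;
    0, 1, 0, 0, 0, 0, 0, 0, 0, 0, 0, -1, 0, 0, 0, 0, 0, 0, 0, 0, 0, -1, 0, 0, 0, 0, 0, 0, 0, 0, 0, -1;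
    0, 0, 1, 0, 0, 0, 0, 0, 1, 0, 0, 0, 0, 0, 0, 0, 0, 0, 0, 0, 0, 0, -1, 0, 0, 0, 0, 0, 1, 0, 0, 0;
    0, 0, 0, 1, 0, 0, 0, 0, 0, -1, 0, 0, 0, 0, 0, 0, 0, 0, 0, 0, 0, 0, 0, 1, 0, 0, 0, 0, 0, 1, 0, 0;
    0, 0, 0, 0, 1, 0, 0, 0, 0, 0, 0, 0, 0, 0, 1, 0, 1, 0, 0, 0, 0, 0, 0, 0, 0, 0, -1, 0, 0, 0, 0, 0;
    0, 0, 0, 0, 0, 1, 0, 0, 0, 0, 0, 0, 0, 0, 0, -1, 0, -1, 0, 0, 0, 0, 0, 0, 0, 0, 0, -1, 0, 0, 0, 0;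
    0, 0, 0, 0, 0, 0, 1, 0, 0, 0, 0, 0, 1, 0, 0, 0, 0, 0, -1, 0, 0, 0, 0, 0, 1, 0, 0, 0, 0, 0, 0, 0;
    0, 0, 0, 0, 0, 0, 0, 1, 0, 0, 0, 0, 0, -1, 0, 0, 0, 0, 0, 1, 0, 0, 0, 0, 0, 1, 0, 0, 0, 0, 0, 0;
    0, 0, 1, 0, 0, 0, 0, 0, 1, 0, 0, 0, 0, 0, 0, 0, 0, 0, 0, 0, 0, 0, -1, 0, 0, 0, 0, 0, 1, 0, 0, 0;
    0, 0, 0, -1, 0, 0, 0, 0, 0, 1, 0, 0, 0, 0, 0, 0, 0, 0, 0, 0, 0, 0, 0, -1, 0, 0, 0, 0, 0, -1, 0, 0;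
    1, 0, 0, 0, 0, 0, 0, 0, 0, 0, 1, 0, 0, 0, 0, 0, 0, 0, 0, 0, 1, 0, 0, 0, 0, 0, 0, 0, 0, 0, -1, 0;
    0, -1, 0, 0, 0, 0, 0, 0, 0, 0, 0, 1, 0, 0, 0, 0, 0, 0, 0, 0, 0, 1, 0, 0, 0, 0, 0, 0, 0, 0, 0, 1;
    0, 0, 0, 0, 0, 0, 1, 0, 0, 0, 0, 0, 1, 0, 0, 0, 0, 0, -1, 0, 0, 0, 0, 0, 1, 0, 0, 0, 0, 0, 0, 0;
    0, 0, 0, 0, 0, 0, 0, -1, 0, 0, 0, 0, 0, 1, 0, 0, 0, 0, 0, -1, 0, 0, 0, 0, 0, -1, 0, 0, 0, 0, 0, 0;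
    0, 0, 0, 0, 1, 0, 0, 0, 0, 0, 0, 0, 0, 0, 1, 0, 1, 0, 0, 0, 0, 0, 0, 0, 0, 0, -1, 0, 0, 0, 0, 0;
    0, 0, 0, 0, 0, -1, 0, 0, 0, 0, 0, 0, 0, 0, 0, 1, 0, 1, 0, 0, 0, 0, 0, 0, 0, 0, 0, 1, 0, 0, 0, 0;
    0, 0, 0, 0, 1, 0, 0, 0, 0, 0, 0, 0, 0, 0, 1, 0, 1, 0, 0, 0, 0, 0, 0, 0, 0, 0, -1, 0, 0, 0, 0, 0;
    0, 0, 0, 0, 0, -1, 0, 0, 0, 0, 0, 0, 0, 0, 0, 1, 0, 1, 0, 0, 0, 0, 0, 0, 0, 0, 0, 1, 0, 0, 0, 0;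
    0, 0, 0, 0, 0, 0, -1, 0, 0, 0, 0, 0, -1, 0, 0, 0, 0, 0, 1, 0, 0, 0, 0, 0, -1, 0, 0, 0, 0, 0, 0, 0;
    0, 0, 0, 0, 0, 0, 0, 1, 0, 0, 0, 0, 0, -1, 0, 0, 0, 0, 0, 1, 0, 0, 0, 0, 0, 1, 0, 0, 0, 0, 0, 0;
    1, 0, 0, 0, 0, 0, 0, 0, 0, 0, 1, 0, 0, 0, 0, 0, 0, 0, 0, 0, 1, 0, 0, 0, 0, 0, 0, 0, 0, 0, -1, 0;
    0, -1, 0, 0, 0, 0, 0, 0, 0, 0, 0, 1, 0, 0, 0, 0, 0, 0, 0, 0, 0, 1, 0, 0, 0, 0, 0, 0, 0, 0, 0, 1;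
    0, 0, -1, 0, 0, 0, 0, 0, -1, 0, 0, 0, 0, 0, 0, 0, 0, 0, 0, 0, 0, 0, 1, 0, 0, 0, 0, 0, -1, 0, 0, 0;
    0, 0, 0, 1, 0, 0, 0, 0, 0, -1, 0, 0, 0, 0, 0, 0, 0, 0, 0, 0, 0, 0, 0, 1, 0, 0, 0, 0, 0, 1, 0, 0;
    0, 0, 0, 0, 0, 0, 1, 0, 0, 0, 0, 0, 1, 0, 0, 0, 0, 0, -1, 0, 0, 0, 0, 0, 1, 0, 0, 0, 0, 0, 0, 0;
    0, 0, 0, 0, 0, 0, 0, 1, 0, 0, 0, 0, 0, -1, 0, 0, 0, 0, 0, 1, 0, 0, 0, 0, 0, 1, 0, 0, 0, 0, 0, 0;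
    0, 0, 0, 0, -1, 0, 0, 0, 0, 0, 0, 0, 0, 0, -1, 0, -1, 0, 0, 0, 0, 0, 0, 0, 0, 0, 1, 0, 0, 0, 0, 0;
    0, 0, 0, 0, 0, -1, 0, 0, 0, 0, 0, 0, 0, 0, 0, 1, 0, 1, 0, 0, 0, 0, 0, 0, 0, 0, 0, 1, 0, 0, 0, 0;
    0, 0, 1, 0, 0, 0, 0, 0, 1, 0, 0, 0, 0, 0, 0, 0, 0, 0, 0, 0, 0, 0, -1, 0, 0, 0, 0, 0, 1, 0, 0, 0;
    0, 0, 0, 1, 0, 0, 0, 0, 0, -1, 0, 0, 0, 0, 0, 0, 0, 0, 0, 0, 0, 0, 0, 1, 0, 0, 0, 0, 0, 1, 0, 0;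
    -1, 0, 0, 0, 0, 0, 0, 0, 0, 0, -1, 0, 0, 0, 0, 0, 0, 0, 0, 0, -1, 0, 0, 0, 0, 0, 0, 0, 0, 0, 1, 0;
    0, -1, 0, 0, 0, 0, 0, 0, 0, 0, 0, 1, 0, 0, 0, 0, 0, 0, 0, 0, 0, 1, 0, 0, 0, 0, 0, 0, 0, 0, 0, 1]

def T123 : Matrix (Fin 32) (Fin 32) ℤ :=
  !![1, 0, 0, -1, 0, 0, 0, 0, 0, 1, 1, 0, 0, 0, 0, 0, 0, 0, 0, 0, 1, 0, 0, -1, 0, 0, 0, 0, 0, -1, -1, 0;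
    0, 1, 1, 0, 0, 0, 0, 0, 1, 0, 0, -1, 0, 0, 0, 0, 0, 0, 0, 0, 0, -1, -1, 0, 0, 0, 0, 0, 1, 0, 0, -1;
    0, 1, 1, 0, 0, 0, 0, 0, 1, 0, 0, -1, 0, 0, 0, 0, 0, 0, 0, 0, 0, -1, -1, 0, 0, 0, 0, 0, 1, 0, 0, -1;
    -1, 0, 0, 1, 0, 0, 0, 0, 0, -1, -1, 0, 0, 0, 0, 0, 0, 0, 0, 0, -1, 0, 0, 1, 0, 0, 0, 0, 0, 1, 1, 0;
    0, 0, 0, 0, 1, 0, 0, 1, 0, 0, 0, 0, 0, -1, 1, 0, 1, 0, 0, 1, 0, 0, 0, 0, 0, 1, -1, 0, 0, 0, 0, 0;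
    0, 0, 0, 0, 0, 1, -1, 0, 0, 0, 0, 0, -1, 0, 0, -1, 0, -1, 1, 0, 0, 0, 0, 0, -1, 0, 0, -1, 0, 0, 0, 0;
    0, 0, 0, 0, 0, -1, 1, 0, 0, 0, 0, 0, 1, 0, 0, 1, 0, 1, -1, 0, 0, 0, 0, 0, 1, 0, 0, 1, 0, 0, 0, 0;
    0, 0, 0, 0, 1, 0, 0, 1, 0, 0, 0, 0, 0, -1, 1, 0, 1, 0, 0, 1, 0, 0, 0, 0, 0, 1, -1, 0, 0, 0, 0, 0;
    0, 1, 1, 0, 0, 0, 0, 0, 1, 0, 0, -1, 0, 0, 0, 0, 0, 0, 0, 0, 0, -1, -1, 0, 0, 0, 0, 0, 1, 0, 0, -1;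
    1, 0, 0, -1, 0, 0, 0, 0, 0, 1, 1, 0, 0, 0, 0, 0, 0, 0, 0, 0, 1, 0, 0, -1, 0, 0, 0, 0, 0, -1, -1, 0;
    1, 0, 0, -1, 0, 0, 0, 0, 0, 1, 1, 0, 0, 0, 0, 0, 0, 0, 0, 0, 1, 0, 0, -1, 0, 0, 0, 0, 0, -1, -1, 0;
    0, -1, -1, 0, 0, 0, 0, 0, -1, 0, 0, 1, 0, 0, 0, 0, 0, 0, 0, 0, 0, 1, 1, 0, 0, 0, 0, 0, -1, 0, 0, 1;
    0, 0, 0, 0, 0, -1, 1, 0, 0, 0, 0, 0, 1, 0, 0, 1, 0, 1, -1, 0, 0, 0, 0, 0, 1, 0, 0, 1, 0, 0, 0, 0;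
    0, 0, 0, 0, -1, 0, 0, -1, 0, 0, 0, 0, 0, 1, -1, 0, -1, 0, 0, -1, 0, 0, 0, 0, 0, -1, 1, 0, 0, 0, 0, 0;
    0, 0, 0, 0, 1, 0, 0, 1, 0, 0, 0, 0, 0, -1, 1, 0, 1, 0, 0, 1, 0, 0, 0, 0, 0, 1, -1, 0, 0, 0, 0, 0;
    0, 0, 0, 0, 0, -1, 1, 0, 0, 0, 0, 0, 1, 0, 0, 1, 0, 1, -1, 0, 0, 0, 0, 0, 1, 0, 0, 1, 0, 0, 0, 0;
    0, 0, 0, 0, 1, 0, 0, 1, 0, 0, 0, 0, 0, -1, 1, 0, 1, 0, 0, 1, 0, 0, 0, 0, 0, 1, -1, 0, 0, 0, 0, 0;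
    0, 0, 0, 0, 0, -1, 1, 0, 0, 0, 0, 0, 1, 0, 0, 1, 0, 1, -1, 0, 0, 0, 0, 0, 1, 0, 0, 1, 0, 0, 0, 0;
    0, 0, 0, 0, 0, 1, -1, 0, 0, 0, 0, 0, -1, 0, 0, -1, 0, -1, 1, 0, 0, 0, 0, 0, -1, 0, 0, -1, 0, 0, 0, 0;
    0, 0, 0, 0, 1, 0, 0, 1, 0, 0, 0, 0, 0, -1, 1, 0, 1, 0, 0, 1, 0, 0, 0, 0, 0, 1, -1, 0, 0, 0, 0, 0;
    1, 0, 0, -1, 0, 0, 0, 0, 0, 1, 1, 0, 0, 0, 0, 0, 0, 0, 0, 0, 1, 0, 0, -1, 0, 0, 0, 0, 0, -1, -1, 0;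
    0, -1, -1, 0, 0, 0, 0, 0, -1, 0, 0, 1, 0, 0, 0, 0, 0, 0, 0, 0, 0, 1, 1, 0, 0, 0, 0, 0, -1, 0, 0, 1;
    0, -1, -1, 0, 0, 0, 0, 0, -1, 0, 0, 1, 0, 0, 0, 0, 0, 0, 0, 0, 0, 1, 1, 0, 0, 0, 0, 0, -1, 0, 0, 1;
    -1, 0, 0, 1, 0, 0, 0, 0, 0, -1, -1, 0, 0, 0, 0, 0, 0, 0, 0, 0, -1, 0, 0, 1, 0, 0, 0, 0, 0, 1, 1, 0;
    0, 0, 0, 0, 0, -1, 1, 0, 0, 0, 0, 0, 1, 0, 0, 1, 0, 1, -1, 0, 0, 0, 0, 0, 1, 0, 0, 1, 0, 0, 0, 0;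
    0, 0, 0, 0, 1, 0, 0, 1, 0, 0, 0, 0, 0, -1, 1, 0, 1, 0, 0, 1, 0, 0, 0, 0, 0, 1, -1, 0, 0, 0, 0, 0;
    0, 0, 0, 0, -1, 0, 0, -1, 0, 0, 0, 0, 0, 1, -1, 0, -1, 0, 0, -1, 0, 0, 0, 0, 0, -1, 1, 0, 0, 0, 0, 0;
    0, 0, 0, 0, 0, -1, 1, 0, 0, 0, 0, 0, 1, 0, 0, 1, 0, 1, -1, 0, 0, 0, 0, 0, 1, 0, 0, 1, 0, 0, 0, 0;
    0, 1, 1, 0, 0, 0, 0, 0, 1, 0, 0, -1, 0, 0, 0, 0, 0, 0, 0, 0, 0, -1, -1, 0, 0, 0, 0, 0, 1, 0, 0, -1;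
    -1, 0, 0, 1, 0, 0, 0, 0, 0, -1, -1, 0, 0, 0, 0, 0, 0, 0, 0, 0, -1, 0, 0, 1, 0, 0, 0, 0, 0, 1, 1, 0;
    -1, 0, 0, 1, 0, 0, 0, 0, 0, -1, -1, 0, 0, 0, 0, 0, 0, 0, 0, 0, -1, 0, 0, 1, 0, 0, 0, 0, 0, 1, 1, 0;
    0, -1, -1, 0, 0, 0, 0, 0, -1, 0, 0, 1, 0, 0, 0, 0, 0, 0, 0, 0, 0, 1, 1, 0, 0, 0, 0, 0, -1, 0, 0, 1]

def T23q : Matrix Q Q ℤ := T23.submatrix idx idx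
def T123q : Matrix Q Q ℤ := T123.submatrix idx idx

set_option maxRecDepth 4000000 in
lemma hSG : ∀ i : Fin 4, Sz i * Gz = Gz := by decide +kernel

set_option maxRecDepth 4000000 in
lemma hKG : Kz * Gz = (16 : ℤ) • 1 := by decide +kernel

set_option maxRecDepth 4000000 in
lemma h23 : (1 + Sz 2) * (1 + Sz 3) = T23q := by decide +kernel

set_option maxRecDepth 4000000 in
lemma h123 : (1 + Sz 1) * T23q = T123q := by decide +kernel

set_option maxRecDepth 4000000 in
lemma h0123 : (1 + Sz 0) * T123q = Gz * Kz := by decide +kernel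

lemma hprod : (1 + Sz 0) * ((1 + Sz 1) * ((1 + Sz 2) * (1 + Sz 3))) = Gz * Kz := by
  rw [h23, h123, h0123]

/-! ### Casting to `ℂ` -/


noncomputable def c : ℤ →+* ℂ := Int.castRingHom ℂ

lemma kron_map {l m n p : Type*} (A : Matrix l m ℤ) (B : Matrix n p ℤ) :
    (A.map c) ⊗ₖ (B.map c) = (A ⊗ₖ B).map ⇑c := by
  ext ⟨i1, i2⟩ ⟨j1, j2⟩
  simp [Matrix.kroneckerMap_apply, Matrix.map_apply, c]

lemma emb_map (g : Fin 5 → Matrix (Fin 2) (Fin 2) ℤ) :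
    emb (fun i => (g i).map c) = (embz g).map ⇑c := by
  simp only [emb, embz, kron_map]

lemma emb_map' (a b d e f : Matrix (Fin 2) (Fin 2) ℤ) :
    emb ![a.map ⇑c, b.map ⇑c, d.map ⇑c, e.map ⇑c, f.map ⇑c] = (embz ![a, b, d, e, f]).map ⇑c := by
  have h : (![a.map ⇑c, b.map ⇑c, d.map ⇑c, e.map ⇑c, f.map ⇑c] :
      Fin 5 → Matrix (Fin 2) (Fin 2) ℂ) = fun i => ((![a, b, d, e, f] : Fin 5 → _) i).map c := by
    funext k
    fin_cases k <;> rfl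
  rw [h, emb_map]

lemma hX : X = Xz.map ⇑c := by
  ext i j
  fin_cases i <;> fin_cases j <;> simp [X, Xz, c]

lemma hZ : Z = Zz.map ⇑c := by
  ext i j
  fin_cases i <;> fin_cases j <;> simp [Z, Zz, c]

lemma hone : (1 : Matrix (Fin 2) (Fin 2) ℂ) = (1 : Matrix (Fin 2) (Fin 2) ℤ).map ⇑c := by
  ext i j
  fin_cases i <;> fin_cases j <;> simp [Matrix.one_apply, c]

lemma hS : ∀ i : Fin 4, S i = (Sz i).map ⇑c := by
  intro i
  fin_cases i
  · show emb ![X, Z, Z, X, 1] = (embz ![Xz, Zz, Zz, Xz, 1]).map ⇑c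
    rw [hX, hZ, hone]; exact emb_map' _ _ _ _ _
  · show emb ![1, X, Z, Z, X] = (embz ![1, Xz, Zz, Zz, Xz]).map ⇑c
    rw [hX, hZ, hone]; exact emb_map' _ _ _ _ _
  · show emb ![X, 1, X, Z, Z] = (embz ![Xz, 1, Xz, Zz, Zz]).map ⇑c
    rw [hX, hZ, hone]; exact emb_map' _ _ _ _ _
  · show emb ![Z, X, 1, X, Z] = (embz ![Zz, Xz, 1, Xz, Zz]).map ⇑c
    rw [hX, hZ, hone]; exact emb_map' _ _ _ _ _

noncomputable def Gc : Matrix Q (Fin 2) ℂ := Gz.map ⇑c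
noncomputable def Kc : Matrix (Fin 2) Q ℂ := Kz.map ⇑c

lemma hSGc (i : Fin 4) : S i * Gc = Gc := by
  rw [hS, Gc, ← Matrix.map_mul, hSG]

lemma hKGc : Kc * Gc = (16 : ℂ) • 1 := by
  rw [Kc, Gc, ← Matrix.map_mul, hKG]
  ext i j
  fin_cases i <;> fin_cases j <;>
    · simp only [Matrix.map_apply, Matrix.smul_apply, Matrix.one_apply, smul_eq_mul]
      norm_num [c]

lemma map_one_add (A : Matrix Q Q ℤ) :
    (1 + A).map ⇑c = 1 + A.map ⇑c := by
  rw [Matrix.map_add ⇑c (fun a b => map_add c a b), Matrix.map_one ⇑c (map_zero c) (map_one c)]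

lemma hprodc : (1 + S 0) * ((1 + S 1) * ((1 + S 2) * (1 + S 3))) = Gc * Kc := by
  rw [hS 0, hS 1, hS 2, hS 3, Gc, Kc, ← Matrix.map_mul, ← hprod, Matrix.map_mul,
    Matrix.map_mul, Matrix.map_mul, map_one_add, map_one_add, map_one_add, map_one_add]

/-! ### The main theorem -/

/-- the five-qubit code subspace `C₅ = ⨅ i, ker (Sᵢ - id)` has dimension 2. -/
theorem five_qubit_code_dim_two :
    Module.finrank ℂ
      ↥(⨅ i : Fin 4, LinearMap.ker (Matrix.toLin' (S i) - LinearMap.id)) = 2 := by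
  have h16ne : (16 : ℂ) ≠ 0 := by norm_num
  have key : (⨅ i : Fin 4, LinearMap.ker (Matrix.toLin' (S i) - LinearMap.id)) =
      LinearMap.range (Matrix.toLin' Gc) := by
    apply le_antisymm
    · intro x hx
      simp only [Submodule.mem_iInf, LinearMap.mem_ker, LinearMap.sub_apply,
        LinearMap.id_apply, sub_eq_zero] at hx
      have step : ∀ (A : Matrix Q Q ℂ) (k : ℂ) (y : Q → ℂ), Matrix.toLin' A y = y →
          Matrix.toLin' (1 + A) (k • y) = (2 * k) • y := by
        intro A k y hy
        rw [LinearMap.map_smul, _root_.map_add Matrix.toLin', Matrix.toLin'_one,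
          LinearMap.add_apply, LinearMap.id_apply, hy, ← two_smul ℂ y, smul_smul, mul_comm]
      have h3 : Matrix.toLin' (1 + S 3) x = (2 : ℂ) • x := by
        rw [_root_.map_add Matrix.toLin', Matrix.toLin'_one, LinearMap.add_apply,
          LinearMap.id_apply, hx 3, two_smul]
      have e1 : Matrix.toLin' (Gc * Kc) x = (16 : ℂ) • x := by
        rw [← hprodc, Matrix.toLin'_mul_apply, Matrix.toLin'_mul_apply,
          Matrix.toLin'_mul_apply, h3, step _ _ _ (hx 2), step _ _ _ (hx 1),
          step _ _ _ (hx 0)]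
        norm_num
      refine ⟨(16 : ℂ)⁻¹ • Matrix.toLin' Kc x, ?_⟩
      rw [LinearMap.map_smul, ← Matrix.toLin'_mul_apply, e1, smul_smul,
        inv_mul_cancel₀ h16ne, one_smul]
    · rintro x ⟨y, rfl⟩
      simp only [Submodule.mem_iInf, LinearMap.mem_ker, LinearMap.sub_apply,
        LinearMap.id_apply, sub_eq_zero]
      intro i
      rw [← Matrix.toLin'_mul_apply, hSGc]
  rw [key]
  have hinj : Function.Injective (Matrix.toLin' Gc) := by
    intro a b hab
    have h := congrArg (Matrix.toLin' Kc) hab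
    rw [← Matrix.toLin'_mul_apply, ← Matrix.toLin'_mul_apply, hKGc] at h
    have h16 : ∀ v : Fin 2 → ℂ, Matrix.toLin' ((16 : ℂ) • (1 : Matrix (Fin 2) (Fin 2) ℂ)) v
        = (16 : ℂ) • v := by
      intro v
      rw [_root_.map_smul Matrix.toLin', Matrix.toLin'_one, LinearMap.smul_apply,
        LinearMap.id_apply]
    rw [h16, h16] at h
    exact smul_right_injective (Fin 2 → ℂ) h16ne h
  rw [LinearMap.finrank_range_of_inj hinj]
  exact Module.finrank_fin_fun ℂ

end FiveQubitCode
end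

section
/- Let S₁ = X⊗Z⊗Z⊗X⊗1, S₂ = 1⊗X⊗Z⊗Z⊗X, S₃ = X⊗1⊗X⊗Z⊗Z, S₄ = Z⊗X⊗1⊗X⊗Z be the five-qubit code stabilizers acting on ℂ²⊗ℂ²⊗ℂ²⊗ℂ²⊗ℂ² (via Kronecker products). Define the ideal observables A₁₀ = H⁽¹⁾, A₁₁ = V⁽¹⁾ where H = (X+Z)/√2 and V = (X−Z)/√2, and Aᵢ₀ = X⁽ⁱ⁾, Aᵢ₁ = Z⁽ⁱ⁾ for i = 2,…,5, where M⁽ⁱ⁾ denotes the Kronecker product with M in slot i and the identity elsewhere. Let B₅ = (A₁₀ + A₁₁)·A₂₁·A₃₁·A₄₀ + A₂₀·A₃₁·A₄₁·A₅₀ + (A₁₀ + A₁₁)·A₃₀·A₄₁·A₅₁ + 2·(A₁₀ − A₁₁)·A₂₀·A₄₀·A₅₁. Then every vector ψ with Sᵢ ψ = ψ for all i ∈ Fin 4 satisfies B₅ ψ = (1 + 4√2) • ψ; in particular every state in the code subspace C₅ attains the maximal quantum value 1 + 4√2 of the Bell expression I₅. -/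
noncomputable section

open Matrix
open scoped Kronecker

namespace FiveQubitCode

/-- `H = (X + Z)/√2`. -/
def Hm : Matrix (Fin 2) (Fin 2) ℂ := (Real.sqrt 2 : ℂ)⁻¹ • (X + Z)

/-- `V = (X − Z)/√2`. -/
def Vm : Matrix (Fin 2) (Fin 2) ℂ := (Real.sqrt 2 : ℂ)⁻¹ • (X - Z)

/-- `M⁽ⁱ⁾`: the 2×2 matrix `M` placed in slot `i` and the identity elsewhere. -/
def slot (M : Matrix (Fin 2) (Fin 2) ℂ) (i : Fin 5) : Matrix Q Q ℂ :=
  emb fun k => if k = i then M else 1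

/-- The ideal observables: `A₁₀ = H⁽¹⁾`, `A₁₁ = V⁽¹⁾`, and `Aᵢ₀ = X⁽ⁱ⁾`, `Aᵢ₁ = Z⁽ⁱ⁾`
for the remaining sites (sites are indexed `0,…,4`). -/
def A : Fin 5 → Fin 2 → Matrix Q Q ℂ := fun i x =>
  if i = 0 then (if x = 0 then slot Hm 0 else slot Vm 0)
  else (if x = 0 then slot X i else slot Z i)

/-- The Bell operator `B₅` for the ideal observables. -/
def B : Matrix Q Q ℂ :=
  (A 0 0 + A 0 1) * A 1 1 * A 2 1 * A 3 0 +
    A 1 0 * A 2 1 * A 3 1 * A 4 0 +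
    (A 0 0 + A 0 1) * A 2 0 * A 3 1 * A 4 1 +
    2 • ((A 0 0 - A 0 1) * A 1 0 * A 3 0 * A 4 1)

lemma emb_mul (g h : Fin 5 → Matrix (Fin 2) (Fin 2) ℂ) :
    emb g * emb h = emb fun k => g k * h k := by
  simp only [emb, ← Matrix.mul_kronecker_mul]

lemma sq2 : (Real.sqrt 2 : ℂ) * (Real.sqrt 2 : ℂ) = 2 := by
  rw [← Complex.ofReal_mul, Real.mul_self_sqrt (by norm_num)]; norm_num

lemma s_ne : (Real.sqrt 2 : ℂ) ≠ 0 := by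
  simp [Complex.ofReal_ne_zero]

lemma HV_add : Hm + Vm = (Real.sqrt 2 : ℂ) • X := by
  rw [Hm, Vm, ← smul_add]
  have h : X + Z + (X - Z) = (2:ℂ) • X := by module
  rw [h, smul_smul]
  congr 1
  field_simp [sq2]
  rw [sq, sq2]

lemma HV_sub : Hm - Vm = (Real.sqrt 2 : ℂ) • Z := by
  rw [Hm, Vm, ← smul_sub]
  have h : X + Z - (X - Z) = (2:ℂ) • Z := by module
  rw [h, smul_smul]
  congr 1
  field_simp [sq2]
  rw [sq, sq2]

lemma sub_kron {n p : Type*} (A B : Matrix (Fin 2) (Fin 2) ℂ) (C : Matrix n p ℂ) :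
    (A - B) ⊗ₖ C = A ⊗ₖ C - B ⊗ₖ C := by
  ext ⟨i, j⟩ ⟨k, l⟩
  simp [Matrix.kroneckerMap_apply, sub_mul]

lemma hB : B = (Real.sqrt 2:ℂ) • S 0 + S 1 + (Real.sqrt 2:ℂ) • S 2 +
    ((2:ℂ) * Real.sqrt 2) • S 3 := by
  rw [B, ← Nat.cast_smul_eq_nsmul ℂ]
  have hA00 : A 0 0 = slot Hm 0 := rfl
  have hA01 : A 0 1 = slot Vm 0 := rfl
  have hA10 : A 1 0 = slot X 1 := rfl
  simp only [A, show ((0:Fin 5) = 0) = True from by simp, show ((1:Fin 5) = 0) = False from by decide,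
    show ((2:Fin 5) = 0) = False from by decide, show ((3:Fin 5) = 0) = False from by decide,
    show ((4:Fin 5) = 0) = False from by decide, show ((0:Fin 2) = 0) = True from by simp,
    show ((1:Fin 2) = 0) = False from by decide, if_true, if_false]
  simp only [slot, add_mul, sub_mul, emb_mul]
  simp [emb, S]
  simp only [← Matrix.add_kronecker, ← sub_kron, HV_add, HV_sub,
    Matrix.smul_kronecker]
  rw [show ∀ (M : Matrix Q Q ℂ), (2:ℂ) • ((Real.sqrt 2:ℂ) • M) = ((2:ℂ) * Real.sqrt 2) • M from
    fun M => by rw [smul_smul]]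
  norm_cast

/-- every vector stabilized by the four five-qubit-code stabilizers is an
eigenvector of the ideal Bell operator `B₅` with eigenvalue `1 + 4√2`. -/
theorem code_states_attain_max_violation (ψ : Q → ℂ) (hψ : ∀ i : Fin 4, S i *ᵥ ψ = ψ) :
    B *ᵥ ψ = ((1 + 4 * Real.sqrt 2 : ℝ) : ℂ) • ψ := by
  rw [hB, Matrix.add_mulVec, Matrix.add_mulVec, Matrix.add_mulVec, Matrix.smul_mulVec,
    Matrix.smul_mulVec, Matrix.smul_mulVec, hψ 0, hψ 1, hψ 2, hψ 3]
  funext x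
  simp only [Pi.add_apply, Pi.smul_apply, smul_eq_mul]
  push_cast
  ring

end FiveQubitCode
end
end

section
/- Let P be a complex n×n orthogonal projection matrix (P Hermitian with P·P = P) and ρ a density matrix with t := (trace (P·ρ)).re ≠ 0, and set ρ_s := t⁻¹ • (P·ρ·P). Then for every density matrix σ with P·σ·P = σ, the fidelity factorizes as F(σ, ρ) = t · F(σ, ρ_s). -/
noncomputable section

open Matrix
open scoped Classical ComplexOrder

namespace SubspaceFidelity

/-- The positive semidefinite square root of a positive semidefinite matrix
(junk value `0` on matrices that are not positive semidefinite). -/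
def psqrt {n : ℕ} (M : Matrix (Fin n) (Fin n) ℂ) : Matrix (Fin n) (Fin n) ℂ :=
  if h : M.PosSemidef then
    h.1.eigenvectorUnitary.1 * diagonal ((↑) ∘ (√·) ∘ h.1.eigenvalues) *
      (star h.1.eigenvectorUnitary : Matrix (Fin n) (Fin n) ℂ)
  else 0

/-- The fidelity `F(σ, ρ) = (tr √(√σ · ρ · √σ))²` of two positive semidefinite matrices. -/
def fid {n : ℕ} (σ ρ : Matrix (Fin n) (Fin n) ℂ) : ℝ :=
  ((psqrt (psqrt σ * ρ * psqrt σ)).trace).re ^ 2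

section SqrtHelpers
open scoped MatrixOrder Matrix.Norms.L2Operator

/-- The positive semidefinite square root (replacement for the removed Mathlib definition). -/
abbrev _root_.Matrix.PosSemidef.sqrt {n : ℕ} {M : Matrix (Fin n) (Fin n) ℂ} (h : M.PosSemidef) :
    Matrix (Fin n) (Fin n) ℂ :=
  h.1.eigenvectorUnitary.1 * diagonal ((↑) ∘ (√·) ∘ h.1.eigenvalues) *
    (star h.1.eigenvectorUnitary : Matrix (Fin n) (Fin n) ℂ)

lemma _root_.Matrix.PosSemidef.sqrt_eq_cfc {n : ℕ} {M : Matrix (Fin n) (Fin n) ℂ}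
    (h : M.PosSemidef) : h.sqrt = CFC.sqrt M := by
  have h0 : (0 : Matrix (Fin n) (Fin n) ℂ) ≤ M := nonneg_iff_posSemidef.mpr h
  rw [CFC.sqrt_eq_real_sqrt M h0, cfcₙ_eq_cfc, h.1.cfc_eq, IsHermitian.cfc, Unitary.conjStarAlgAut_apply]
  rfl

lemma _root_.Matrix.PosSemidef.posSemidef_sqrt {n : ℕ} {M : Matrix (Fin n) (Fin n) ℂ}
    (h : M.PosSemidef) : h.sqrt.PosSemidef := by
  rw [h.sqrt_eq_cfc]; exact nonneg_iff_posSemidef.mp (CFC.sqrt_nonneg M)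

lemma _root_.Matrix.PosSemidef.sq_sqrt {n : ℕ} {M : Matrix (Fin n) (Fin n) ℂ}
    (h : M.PosSemidef) : h.sqrt ^ 2 = M := by
  rw [h.sqrt_eq_cfc]; exact CFC.sq_sqrt M (nonneg_iff_posSemidef.mpr h)

lemma _root_.Matrix.PosSemidef.sqrt_mul_self {n : ℕ} {M : Matrix (Fin n) (Fin n) ℂ}
    (h : M.PosSemidef) : h.sqrt * h.sqrt = M := by
  rw [h.sqrt_eq_cfc]; exact CFC.sqrt_mul_sqrt_self M (nonneg_iff_posSemidef.mpr h)

lemma _root_.Matrix.PosSemidef.eq_sqrt_of_sq_eq {n : ℕ} {B : Matrix (Fin n) (Fin n) ℂ}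
    (hB : B.PosSemidef) {A : Matrix (Fin n) (Fin n) ℂ} (hA : A.PosSemidef) (hBA : B ^ 2 = A) :
    B = hA.sqrt := by
  rw [hA.sqrt_eq_cfc]
  exact (CFC.sqrt_unique (by rw [← hBA, sq]) (nonneg_iff_posSemidef.mpr hB)).symm

end SqrtHelpers

lemma psd_smul {n : ℕ} {M : Matrix (Fin n) (Fin n) ℂ} (hM : M.PosSemidef)
    {c : ℝ} (hc : 0 ≤ c) : (c • M).PosSemidef := by
  exact hM.smul hc

lemma psd_trace_re_nonneg {n : ℕ} {M : Matrix (Fin n) (Fin n) ℂ} (hM : M.PosSemidef) :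
    0 ≤ M.trace.re := by
  have h : ∀ i, 0 ≤ M i i := fun i => by
    exact hM.diag_nonneg
  rw [trace]
  simp only [Complex.re_sum]
  exact Finset.sum_nonneg fun i _ => (Complex.le_def.mp (h i)).1

lemma sqrt_smul' {n : ℕ} {M : Matrix (Fin n) (Fin n) ℂ} (hM : M.PosSemidef)
    {c : ℝ} (hc : 0 ≤ c) (h2 : (c • M).PosSemidef) :
    h2.sqrt = Real.sqrt c • hM.sqrt := by
  refine ((psd_smul hM.posSemidef_sqrt (Real.sqrt_nonneg c)).eq_sqrt_of_sq_eq h2 ?_).symm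
  rw [smul_pow, hM.sq_sqrt, Real.sq_sqrt hc]

lemma support_sqrt {n : ℕ} {P σ : Matrix (Fin n) (Fin n) ℂ} (hP : P.IsHermitian)
    (hproj : P * P = P) (hσ : σ.PosSemidef) (hsupp : P * σ * P = σ) :
    hσ.sqrt * P = hσ.sqrt ∧ P * hσ.sqrt = hσ.sqrt := by
  set S := hσ.sqrt with hS
  set Q := (1 : Matrix (Fin n) (Fin n) ℂ) - P with hQ
  have hQP : Q * P = 0 := by rw [hQ, sub_mul, one_mul, hproj, sub_self]
  have hQσQ : Q * σ * Q = 0 := by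
    rw [← hsupp, show Q * (P * σ * P) * Q = (Q * P) * σ * (P * Q) by simp only [mul_assoc], hQP]
    have hPQ : P * Q = 0 := by rw [hQ, mul_sub, mul_one, hproj, sub_self]
    rw [hPQ]; simp
  have hQH : Qᴴ = Q := by rw [hQ, conjTranspose_sub, conjTranspose_one, hP.eq]
  have hSQ : S * Q = 0 := by
    have : (S * Q)ᴴ * (S * Q) = 0 := by
      rw [conjTranspose_mul, hQH, hσ.posSemidef_sqrt.1.eq,
        show Q * S * (S * Q) = Q * (S * S) * Q by simp only [mul_assoc], hσ.sqrt_mul_self, hQσQ]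
    exact conjTranspose_mul_self_eq_zero.mp this
  have h1 : S * P = S := by
    have := hSQ; rw [hQ, mul_sub, mul_one, sub_eq_zero] at this; exact this.symm
  refine ⟨h1, ?_⟩
  have := congrArg conjTranspose h1
  rwa [conjTranspose_mul, hP.eq, hσ.posSemidef_sqrt.1.eq] at this

/-- with `t = tr(P·ρ) ≠ 0` and `ρ_s = t⁻¹ • (P·ρ·P)`, the fidelity factorizes
as `F(σ, ρ) = t · F(σ, ρ_s)` for every density matrix `σ` supported on the projection `P`. -/
theorem fidelity_factorization (n : ℕ) (P ρ : Matrix (Fin n) (Fin n) ℂ)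
    (hP : P.IsHermitian) (hproj : P * P = P)
    (hρ : ρ.PosSemidef) (hρtr : ρ.trace = 1)
    (ht : ((P * ρ).trace).re ≠ 0) :
    ∀ σ : Matrix (Fin n) (Fin n) ℂ, σ.PosSemidef → σ.trace = 1 → P * σ * P = σ →
      fid σ ρ = ((P * ρ).trace).re * fid σ ((((P * ρ).trace).re)⁻¹ • (P * ρ * P)) := by
  intro σ hσ hσtr hsupp
  set t : ℝ := ((P * ρ).trace).re with htdef
  set ρs : Matrix (Fin n) (Fin n) ℂ := t⁻¹ • (P * ρ * P) with hρsdef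
  -- P ρ P is PSD
  have hPρP : (P * ρ * P).PosSemidef := by
    have := hρ.mul_mul_conjTranspose_same P
    rwa [hP.eq] at this
  -- t ≥ 0
  have htr_eq : (P * ρ * P).trace = (P * ρ).trace := by
    rw [trace_mul_cycle, hproj]
  have ht0 : 0 ≤ t := by
    have := psd_trace_re_nonneg hPρP
    rwa [htr_eq] at this
  have hρs : ρs.PosSemidef := psd_smul hPρP (inv_nonneg.mpr ht0)
  -- the square root of σ
  set S := hσ.sqrt with hSdef
  have hpsσ : psqrt σ = S := by rw [psqrt, dif_pos hσ]
  obtain ⟨hSP, hPS⟩ := support_sqrt hP hproj hσ hsupp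
  -- the middle matrix
  have hM : (S * ρs * S).PosSemidef := by
    have := hρs.mul_mul_conjTranspose_same S
    rwa [hσ.posSemidef_sqrt.1.eq] at this
  have key : S * ρ * S = t • (S * ρs * S) := by
    have h1 : t • ρs = P * ρ * P := by
      rw [hρsdef, smul_smul, mul_inv_cancel₀ ht, one_smul]
    calc S * ρ * S = (S * P) * ρ * (P * S) := by rw [hSP, hPS]
      _ = S * (P * ρ * P) * S := by simp only [mul_assoc]
      _ = S * (t • ρs) * S := by rw [h1]
      _ = t • (S * ρs * S) := by
          rw [mul_smul_comm, smul_mul_assoc]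
  have hMt : (S * ρ * S).PosSemidef := by rw [key]; exact psd_smul hM ht0
  have hps1 : psqrt (S * ρ * S) = Real.sqrt t • hM.sqrt := by
    rw [psqrt, dif_pos hMt]
    refine ((psd_smul hM.posSemidef_sqrt (Real.sqrt_nonneg t)).eq_sqrt_of_sq_eq hMt ?_).symm
    rw [smul_pow, hM.sq_sqrt, Real.sq_sqrt ht0, ← key]
  have hps2 : psqrt (S * ρs * S) = hM.sqrt := by rw [psqrt, dif_pos hM]
  rw [fid, fid, hpsσ, hps1, hps2, trace_smul]
  have hre : ((Real.sqrt t • hM.sqrt.trace)).re = Real.sqrt t * hM.sqrt.trace.re := by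
    rw [Complex.real_smul, Complex.re_ofReal_mul]
  rw [hre, mul_pow, Real.sq_sqrt ht0]

end SubspaceFidelity
end
end
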